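/- Let n ≥ 1. The Lebesgue measure of Δ in ℝ^n equals (a_1·a_2···a_n + Σ_{j=1}^{n} d_j·∏_{1 ≤ i ≤ n, i ≠ j} a_i)/n!. -/

import Mathlib

open Finset MeasureTheory

def corner (n : ℕ) (r : ℝ) : Set (Fin n → ℝ) := {x | (∀ i, 0 ≤ x i) ∧ ∑ i, x i ≤ r}

lemma corner_empty {n : ℕ} {r : ℝ} (hr : r < 0) : corner n r = ∅ := by
  ext x
  simp only [corner, Set.mem_setOf_eq, Set.mem_empty_iff_false, iff_false, not_and]
  intro hx hs
  exact absurd (le_trans (Finset.sum_nonneg fun i _ => hx i) hs) (not_le.2 hr)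

lemma isClosed_corner (n : ℕ) (r : ℝ) : IsClosed (corner n r) := by
  have h1 : IsClosed {x : Fin n → ℝ | ∀ i, 0 ≤ x i} := by
    have : {x : Fin n → ℝ | ∀ i, 0 ≤ x i} = ⋂ i, {x | 0 ≤ x i} := by ext; simp
    rw [this]
    exact isClosed_iInter fun i => isClosed_le continuous_const (continuous_apply i)
  have h2 : IsClosed {x : Fin n → ℝ | ∑ i, x i ≤ r} :=
    isClosed_le (continuous_finset_sum _ fun i _ => continuous_apply i) continuous_const
  exact h1.inter h2

lemma measurableSet_corner (n : ℕ) (r : ℝ) : MeasurableSet (corner n r) :=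
  (isClosed_corner n r).measurableSet

lemma volume_corner (n : ℕ) : ∀ r : ℝ, 0 ≤ r →
    volume (corner n r) = ENNReal.ofReal (r ^ n / n.factorial) := by
  induction n with
  | zero =>
    intro r hr
    have h : corner 0 r = Set.univ := by
      ext x
      simp [corner, hr]
    have h2 : (Set.univ : Set (Fin 0 → ℝ)) = Set.pi Set.univ (fun _ => Set.univ) := by simp
    rw [h, h2, volume_pi_pi]
    simp
  | succ n ih =>
    intro r hr
    set e := MeasurableEquiv.piFinSuccAbove (fun _ : Fin (n+1) => ℝ) 0 with he
    have hmp : MeasurePreserving e volume volume :=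
      volume_preserving_piFinSuccAbove (fun _ : Fin (n+1) => ℝ) 0
    set s : Set (ℝ × (Fin n → ℝ)) :=
      {p | 0 ≤ p.1 ∧ (∀ i, 0 ≤ p.2 i) ∧ p.1 + ∑ i, p.2 i ≤ r} with hs
    have hsm : MeasurableSet s := by
      have h1 : IsClosed {p : ℝ × (Fin n → ℝ) | 0 ≤ p.1} :=
        isClosed_le continuous_const continuous_fst
      have h2 : IsClosed {p : ℝ × (Fin n → ℝ) | ∀ i, 0 ≤ p.2 i} := by
        have heq : {p : ℝ × (Fin n → ℝ) | ∀ i, 0 ≤ p.2 i} = ⋂ i, {p | 0 ≤ p.2 i} := by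
          ext; simp
        rw [heq]
        exact isClosed_iInter fun i =>
          isClosed_le continuous_const ((continuous_apply i).comp continuous_snd)
      have h3 : IsClosed {p : ℝ × (Fin n → ℝ) | p.1 + ∑ i, p.2 i ≤ r} :=
        isClosed_le (continuous_fst.add (continuous_finset_sum _ fun i _ =>
          (continuous_apply i).comp continuous_snd)) continuous_const
      exact ((h1.inter (h2.inter h3)).measurableSet : _)
    have hex : ∀ x : Fin (n+1) → ℝ, e x = (x 0, fun i => x i.succ) := by
      intro x
      rw [he, MeasurableEquiv.piFinSuccAbove_apply]
      refine Prod.ext rfl ?_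
      funext i
      simp [Fin.removeNth, Fin.tail, Fin.zero_succAbove]
    have hpre : corner (n+1) r = e ⁻¹' s := by
      ext x
      simp only [corner, Set.mem_setOf_eq, Set.mem_preimage, hex x, hs]
      constructor
      · rintro ⟨h1, h2⟩
        refine ⟨h1 0, fun i => h1 _, ?_⟩
        rw [Fin.sum_univ_succ (f := x)] at h2
        exact h2
      · rintro ⟨h1, h2, h3⟩
        refine ⟨fun i => ?_, by rw [Fin.sum_univ_succ (f := x)]; exact h3⟩
        rcases Fin.eq_zero_or_eq_succ i with h | ⟨j, rfl⟩
        · subst h; exact h1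
        · exact h2 j
    rw [hpre, hmp.measure_preimage hsm.nullMeasurableSet]
    rw [Measure.volume_eq_prod, Measure.prod_apply hsm]
    have hval : ∀ t : ℝ, volume (Prod.mk t ⁻¹' s) =
        Set.indicator (Set.Icc 0 r) (fun t => ENNReal.ofReal ((r - t) ^ n / n.factorial)) t := by
      intro t
      have hslice : Prod.mk t ⁻¹' s = if 0 ≤ t then corner n (r - t) else ∅ := by
        split_ifs with ht
        · ext y; simp [hs, corner, ht, le_sub_iff_add_le, add_comm]
        · ext y; simp [hs, corner, ht]
      rw [hslice]
      rcases le_or_gt 0 t with ht | ht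
      · rcases le_or_gt t r with htr | htr
        · rw [if_pos ht, ih (r - t) (by linarith),
            Set.indicator_of_mem (Set.mem_Icc.2 ⟨ht, htr⟩)]
        · rw [if_pos ht, corner_empty (by linarith),
            Set.indicator_of_notMem (by simp [htr.not_ge])]
          simp
      · rw [if_neg ht.not_ge, Set.indicator_of_notMem (by simp [ht.not_ge])]
        simp
    simp_rw [hval]
    rw [lintegral_indicator measurableSet_Icc
      (fun t => ENNReal.ofReal ((r - t) ^ n / n.factorial))]
    rw [← ofReal_integral_eq_lintegral_ofReal]
    · rw [MeasureTheory.integral_Icc_eq_integral_Ioc, ← intervalIntegral.integral_of_le hr]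
      have h2 : ∫ t in (0:ℝ)..r, (r - t) ^ n / n.factorial =
          (∫ t in (0:ℝ)..r, (r - t) ^ n) / n.factorial := by
        simp [intervalIntegral.integral_div]
      rw [h2, intervalIntegral.integral_comp_sub_left (fun t => t ^ n) r]
      simp only [sub_zero, sub_self, integral_pow]
      rw [zero_pow (Nat.succ_ne_zero n), sub_zero, Nat.factorial_succ]
      congr 1
      push_cast
      field_simp
    · exact (((continuous_const.sub continuous_id).pow n).div_const _).integrableOn_Icc
    · filter_upwards [ae_restrict_mem measurableSet_Icc] with t ht
      have : t ≤ r := ht.2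
      have h0 : 0 ≤ r - t := by linarith
      positivity


lemma hull_rep {ι : Type*} [Fintype ι] [DecidableEq ι] {E : Type*} [AddCommGroup E]
    [Module ℝ E] (v : ι → E) :
    convexHull ℝ ({0} ∪ Set.range v) =
      {x | ∃ c : ι → ℝ, (∀ i, 0 ≤ c i) ∧ ∑ i, c i ≤ 1 ∧ x = ∑ i, c i • v i} := by
  apply Set.Subset.antisymm
  · apply convexHull_min
    · rintro x (rfl | ⟨i, rfl⟩)
      · exact ⟨0, fun i => le_refl 0, by simp, by simp⟩
      · refine ⟨Pi.single i 1, fun k => ?_, by simp, by simp [Pi.single_apply, ite_smul]⟩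
        by_cases h : k = i <;> simp [Pi.single_apply, h]
    · intro x hx
      obtain ⟨c, hc0, hc1, rfl⟩ := hx
      intro y hy p q hp hq hpq
      obtain ⟨c', hc0', hc1', rfl⟩ := hy
      refine ⟨fun i => p * c i + q * c' i,
        fun i => add_nonneg (mul_nonneg hp (hc0 i)) (mul_nonneg hq (hc0' i)), ?_, ?_⟩
      · calc ∑ i, (p * c i + q * c' i) = p * ∑ i, c i + q * ∑ i, c' i := by
              rw [Finset.sum_add_distrib, Finset.mul_sum, Finset.mul_sum]
          _ ≤ p * 1 + q * 1 :=
              add_le_add (mul_le_mul_of_nonneg_left hc1 hp) (mul_le_mul_of_nonneg_left hc1' hq)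
          _ = 1 := by linarith
      · rw [Finset.smul_sum, Finset.smul_sum, ← Finset.sum_add_distrib]
        congr 1
        funext i
        rw [smul_smul, smul_smul, ← add_smul]
  · rintro x ⟨c, hc0, hc1, rfl⟩
    set w : Option ι → ℝ := fun o => Option.elim o (1 - ∑ i, c i) c with hw
    set z : Option ι → E := fun o => Option.elim o 0 v with hz
    have hw1 : ∑ o, w o = 1 := by rw [Fintype.sum_option]; simp [hw]
    have h := Finset.centerMass_mem_convexHull (s := ({0} ∪ Set.range v))
      Finset.univ (w := w) (z := z) (fun o _ => ?_) (by rw [hw1]; norm_num) (fun o _ => ?_)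
    · rw [Finset.centerMass_eq_of_sum_1 _ _ hw1, Fintype.sum_option] at h
      simpa [hw, hz] using h
    · rcases o with _ | i
      · simpa [hw] using hc1
      · exact hc0 i
    · rcases o with _ | i
      · exact Set.mem_union_left _ rfl
      · exact Set.mem_union_right _ ⟨i, rfl⟩

lemma volume_corner' (n : ℕ) : volume (corner n 1) = ENNReal.ofReal (1 / n.factorial) := by
  rw [volume_corner n 1 zero_le_one, one_pow]

lemma hull_image (n : ℕ) (v : Fin n → (Fin n → ℝ)) :
    convexHull ℝ ({0} ∪ Set.range v) =
      Matrix.toLin' (Matrix.of fun i k => v k i) '' corner n 1 := by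
  have key : ∀ c : Fin n → ℝ, Matrix.toLin' (Matrix.of fun i k => v k i) c = ∑ k, c k • v k := by
    intro c
    funext j
    simp [Matrix.toLin'_apply, Matrix.mulVec, dotProduct, Finset.sum_apply, mul_comm]
  rw [hull_rep]
  ext x
  simp only [Set.mem_image, Set.mem_setOf_eq, corner]
  constructor
  · rintro ⟨c, h0, h1, rfl⟩
    exact ⟨c, ⟨h0, h1⟩, key c⟩
  · rintro ⟨c, ⟨h0, h1⟩, rfl⟩
    exact ⟨c, h0, h1, key c⟩

lemma volume_hull (n : ℕ) (v : Fin n → (Fin n → ℝ)) :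
    volume (convexHull ℝ ({0} ∪ Set.range v)) =
      ENNReal.ofReal (|(Matrix.of fun i k => v k i).det| / n.factorial) := by
  rw [hull_image, Measure.addHaar_image_linearMap, volume_corner', LinearMap.det_toLin',
    ← ENNReal.ofReal_mul (abs_nonneg _)]
  congr 1
  ring


lemma det_col (n : ℕ) (aR dR : Fin n → ℝ) (ha : ∀ i, aR i ≠ 0) (j : Fin n) :
    (Matrix.of fun i k => if k = j then -dR i else (if i = k then aR k else 0)).det
      = -dR j * ∏ i ∈ Finset.univ.erase j, aR i := by
  have hcram : ((1 : Matrix (Fin n) (Fin n) ℝ).updateCol j fun i => -dR i / aR i).det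
      = -dR j / aR j := by
    rw [← Matrix.cramer_apply, Matrix.cramer_one]
    rfl
  have hC : (Matrix.of fun i k : Fin n => if k = j then -dR i else (if i = k then aR k else 0))
      = Matrix.diagonal aR *
        (1 : Matrix (Fin n) (Fin n) ℝ).updateCol j (fun i => -dR i / aR i) := by
    ext i k
    rw [Matrix.diagonal_mul, Matrix.updateCol_apply, Matrix.of_apply]
    by_cases hk : k = j
    · rw [if_pos hk, if_pos hk, mul_div_cancel₀ _ (ha i)]
    · rw [if_neg hk, if_neg hk, Matrix.one_apply]
      by_cases hik : i = k
      · subst hik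
        simp
      · simp [hik]
  rw [hC, Matrix.det_mul, Matrix.det_diagonal, hcram,
    ← Finset.mul_prod_erase Finset.univ aR (Finset.mem_univ j)]
  calc (aR j * ∏ i ∈ Finset.univ.erase j, aR i) * (-dR j / aR j)
      = -dR j * ((aR j / aR j) * ∏ i ∈ Finset.univ.erase j, aR i) := by ring
    _ = -dR j * ∏ i ∈ Finset.univ.erase j, aR i := by rw [div_self (ha j), one_mul]


lemma mem_pieces (n : ℕ) (hn : 1 ≤ n) (aR dR : Fin n → ℝ)
    (ha : ∀ i, 0 < aR i) (hd : ∀ i, 0 < dR i)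
    (μ : ℝ) (lam : Fin n → ℝ) (hμ : 0 ≤ μ) (hlam : ∀ i, 0 ≤ lam i)
    (hs : μ + ∑ i, lam i ≤ 1) :
    (∃ c : Fin n → ℝ, (∀ i, 0 ≤ c i) ∧ ∑ i, c i ≤ 1 ∧
        ∀ k, lam k * aR k - μ * dR k = c k * aR k) ∨
    (∃ j : Fin n, ∃ c : Fin n → ℝ, (∀ i, 0 ≤ c i) ∧ ∑ i, c i ≤ 1 ∧
        ∀ k, lam k * aR k - μ * dR k =
          -(c j * dR k) + (if k = j then 0 else c k * aR k)) := by
  classical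
  obtain ⟨j, -, hj⟩ := Finset.exists_min_image Finset.univ
    (fun i => lam i * aR i / dR i) ⟨⟨0, hn⟩, Finset.mem_univ _⟩
  set t := lam j * aR j / dR j with htdef
  have ht0 : 0 ≤ t := div_nonneg (mul_nonneg (hlam j) (ha j).le) (hd j).le
  have hja : t * dR j = lam j * aR j := div_mul_cancel₀ _ (hd j).ne'
  have hsl : ∑ i, lam i ≤ 1 - μ := by linarith
  have hkey : ∀ i, t * dR i ≤ lam i * aR i := by
    intro i
    have := hj i (Finset.mem_univ i)
    calc t * dR i ≤ (lam i * aR i / dR i) * dR i := by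
          exact mul_le_mul_of_nonneg_right this (hd i).le
      _ = lam i * aR i := div_mul_cancel₀ _ (hd i).ne'
  by_cases hc : μ ≤ t
  · left
    refine ⟨fun i => lam i - μ * dR i / aR i, fun i => ?_, ?_, fun k => ?_⟩
    · rw [sub_nonneg, div_le_iff₀ (ha i)]
      calc μ * dR i ≤ t * dR i := mul_le_mul_of_nonneg_right hc (hd i).le
        _ ≤ lam i * aR i := hkey i
    · calc ∑ i, (lam i - μ * dR i / aR i) ≤ ∑ i, lam i := by
            apply Finset.sum_le_sum
            intro i _
            have : 0 ≤ μ * dR i / aR i := div_nonneg (mul_nonneg hμ (hd i).le) (ha i).le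
            linarith
        _ ≤ 1 := by linarith
    · rw [sub_mul, div_mul_cancel₀ _ (ha k).ne']
  · right
    push_neg at hc
    refine ⟨j, fun i => if i = j then μ - t else lam i - t * dR i / aR i, fun i => ?_, ?_, fun k => ?_⟩
    · beta_reduce
      by_cases hij : i = j
      · rw [if_pos hij]; linarith
      · rw [if_neg hij, sub_nonneg, div_le_iff₀ (ha i)]
        exact hkey i
    · rw [← Finset.add_sum_erase _ _ (Finset.mem_univ j), if_pos rfl]
      have h1 : ∑ i ∈ Finset.univ.erase j, (if i = j then μ - t else lam i - t * dR i / aR i)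
          ≤ ∑ i ∈ Finset.univ.erase j, lam i := by
        apply Finset.sum_le_sum
        intro i hi
        rw [if_neg (Finset.mem_erase.1 hi).1]
        have : 0 ≤ t * dR i / aR i := div_nonneg (mul_nonneg ht0 (hd i).le) (ha i).le
        linarith
      have h2 : ∑ i ∈ Finset.univ.erase j, lam i = (∑ i, lam i) - lam j :=
        Finset.sum_erase_eq_sub (Finset.mem_univ j)
      have h3 : 0 ≤ lam j := hlam j
      linarith
    · beta_reduce
      by_cases hkj : k = j
      · subst hkj
        rw [if_pos rfl, if_pos rfl, add_zero, sub_mul]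
        rw [hja]
        ring
      · rw [if_neg hkj, if_neg hkj, if_pos rfl, sub_mul, sub_mul,
          div_mul_cancel₀ (t * dR k) (ha k).ne']
        ring


lemma hyperplane_null {n : ℕ} (f : (Fin n → ℝ) →ₗ[ℝ] ℝ) (x0 : Fin n → ℝ) (hx0 : f x0 ≠ 0) :
    volume {x : Fin n → ℝ | f x = 0} = 0 := by
  have h : {x : Fin n → ℝ | f x = 0} = (LinearMap.ker f : Set (Fin n → ℝ)) := rfl
  rw [h]
  apply Measure.addHaar_submodule
  intro htop
  exact hx0 (LinearMap.mem_ker.1 (htop ▸ Submodule.mem_top))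


/-- `Δ` is the convex hull of `0`, the points `aᵢ·eᵢ`, and `γ = (-d₁,…,-dₙ)` in `ℝ^n`. -/
def Delta (n : ℕ) (a d : Fin n → ℤ) : Set (Fin n → ℝ) :=
  convexHull ℝ (({0, fun i => -(d i : ℝ)} : Set (Fin n → ℝ)) ∪
    Set.range (fun i : Fin n => fun j => if j = i then (a i : ℝ) else 0))

theorem stmt1 (n : ℕ) (hn : 1 ≤ n) (a d : Fin n → ℤ)
    (ha : ∀ i, 0 < a i) (hd : ∀ i, 0 < d i) :
    volume (Delta n a d) =
      ENNReal.ofReal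
        ((∏ i, (a i : ℝ) + ∑ j, (d j : ℝ) * ∏ i ∈ Finset.univ.erase j, (a i : ℝ)) /
          (Nat.factorial n)) := by
  classical
  have haR : ∀ i, (0:ℝ) < (a i : ℝ) := fun i => by exact_mod_cast ha i
  have hdR : ∀ i, (0:ℝ) < (d i : ℝ) := fun i => by exact_mod_cast hd i
  set γ : Fin n → ℝ := fun i => -(d i : ℝ) with hγ
  set v0 : Fin n → Fin n → ℝ := fun i j => if j = i then (a i : ℝ) else 0 with hv0
  set w : Fin n → Fin n → Fin n → ℝ := fun j i => if i = j then γ else v0 i with hw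
  set P : Option (Fin n) → Set (Fin n → ℝ) :=
    fun o => convexHull ℝ ({0} ∪ Set.range (o.elim v0 w)) with hPdef
  -- coordinate evaluation of sums
  have hsum0 : ∀ (c : Fin n → ℝ) (k : Fin n), (∑ i, c i • v0 i) k = c k * (a k : ℝ) := by
    intro c k
    rw [Finset.sum_apply]
    simp only [hv0, Pi.smul_apply, smul_eq_mul, mul_ite, mul_zero]
    rw [Finset.sum_ite_eq Finset.univ k (fun i => c i * (a i : ℝ))]
    simp
  have hsumw : ∀ (j : Fin n) (c : Fin n → ℝ) (k : Fin n),
      (∑ i, c i • w j i) k = -(c j * (d k : ℝ)) + (if k = j then 0 else c k * (a k : ℝ)) := by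
    intro j c k
    rw [Finset.sum_apply, ← Finset.add_sum_erase _ _ (Finset.mem_univ j)]
    have h1 : (c j • w j j) k = -(c j * (d k : ℝ)) := by
      rw [hw]
      simp [hγ]
    have h2 : ∀ i ∈ Finset.univ.erase j,
        (c i • w j i) k = if k = i then c i * (a i : ℝ) else 0 := by
      intro i hi
      rw [hw]
      simp only [Pi.smul_apply, smul_eq_mul]
      rw [if_neg (Finset.mem_erase.1 hi).1]
      simp [hv0, mul_ite]
    rw [Finset.sum_congr rfl h2,
      Finset.sum_ite_eq (Finset.univ.erase j) k (fun i => c i * (a i : ℝ)), h1]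
    by_cases hkj : k = j
    · rw [if_pos hkj, if_neg (by simp [hkj])]
    · rw [if_neg hkj, if_pos (Finset.mem_erase.2 ⟨hkj, Finset.mem_univ k⟩)]
  -- decomposition
  have hgen : (({0, fun i => -(d i : ℝ)} : Set (Fin n → ℝ)) ∪
      Set.range (fun i : Fin n => fun j => if j = i then (a i : ℝ) else 0)) =
      {0} ∪ Set.range (fun o : Option (Fin n) => o.elim γ v0) := by
    ext x
    simp only [Set.mem_union, Set.mem_insert_iff, Set.mem_singleton_iff, Set.mem_range,
      Option.exists, Option.elim]
    tauto
  have hΔ : Delta n a d = ⋃ o, P o := by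
    apply Set.Subset.antisymm
    · rw [Delta, hgen, hull_rep]
      rintro x ⟨c, hc0, hc1, hxe⟩
      have hxk : ∀ k, x k = c (some k) * (a k : ℝ) - c none * (d k : ℝ) := by
        intro k
        rw [hxe, Fintype.sum_option, Pi.add_apply]
        simp only [Option.elim_none, Option.elim_some]
        rw [hsum0]
        simp only [Pi.smul_apply, smul_eq_mul, hγ]
        ring
      rw [Fintype.sum_option] at hc1
      rcases mem_pieces n hn (fun i => (a i : ℝ)) (fun i => (d i : ℝ)) haR hdR
        (c none) (fun i => c (some i)) (hc0 none) (fun i => hc0 (some i)) hc1 with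
        ⟨c', h0, h1, heq⟩ | ⟨j, c', h0, h1, heq⟩
      · refine Set.mem_iUnion.2 ⟨none, ?_⟩
        rw [hPdef]
        simp only [Option.elim_none]
        rw [hull_rep]
        refine ⟨c', h0, h1, funext fun k => ?_⟩
        rw [hxk k, hsum0]
        exact heq k
      · refine Set.mem_iUnion.2 ⟨some j, ?_⟩
        rw [hPdef]
        simp only [Option.elim_some]
        rw [hull_rep]
        refine ⟨c', h0, h1, funext fun k => ?_⟩
        rw [hxk k, hsumw]
        exact heq k
    · apply Set.iUnion_subset
      intro o
      rw [hPdef, Delta]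
      apply convexHull_mono
      rcases o with _ | j
      · apply Set.union_subset_union
        · intro x hx
          exact Set.mem_insert_iff.2 (Or.inl hx)
        · intro x hx
          exact hx
      · intro x hx
        rcases hx with hx | ⟨i, rfl⟩
        · exact Or.inl (Set.mem_insert_iff.2 (Or.inl hx))
        · simp only [Option.elim_some, hw]
          by_cases hij : i = j
          · rw [if_pos hij]
            exact Or.inl (Set.mem_insert_iff.2 (Or.inr rfl))
          · rw [if_neg hij]
            exact Or.inr ⟨i, rfl⟩
  -- sign facts for pieces
  have hPnone : ∀ x ∈ P none, ∀ k, 0 ≤ x k := by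
    intro x hx k
    rw [hPdef] at hx
    simp only [Option.elim_none] at hx
    rw [hull_rep] at hx
    obtain ⟨c, h0, h1, rfl⟩ := hx
    rw [hsum0]
    exact mul_nonneg (h0 k) (haR k).le
  have hPsome : ∀ j : Fin n, ∀ x ∈ P (some j), ∀ k,
      0 ≤ x k * (d j : ℝ) - x j * (d k : ℝ) ∧ x j ≤ 0 := by
    intro j x hx k
    rw [hPdef] at hx
    simp only [Option.elim_some] at hx
    rw [hull_rep] at hx
    obtain ⟨c, h0, h1, rfl⟩ := hx
    simp only [hsumw, eq_self_iff_true, if_true]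
    constructor
    · by_cases hkj : k = j
      · subst hkj
        simp
      · rw [if_neg hkj]
        have heq2 : (-(c j * (d k : ℝ)) + c k * (a k : ℝ)) * (d j : ℝ) -
            (-(c j * (d j : ℝ)) + 0) * (d k : ℝ) = c k * (a k : ℝ) * (d j : ℝ) := by ring
        rw [heq2]
        exact mul_nonneg (mul_nonneg (h0 k) (haR k).le) (hdR j).le
    · rw [add_zero, neg_nonpos]
      exact mul_nonneg (h0 j) (hdR j).le
  -- null-measurability
  have hPm : ∀ o, NullMeasurableSet (P o) volume := by
    intro o
    rw [hPdef]
    exact (((Set.finite_singleton 0).union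
      (Set.finite_range _)).isCompact_convexHull ℝ |>.isClosed.measurableSet).nullMeasurableSet
  -- a.e. disjointness
  have hae : Pairwise (Function.onFun (MeasureTheory.AEDisjoint volume) P) := by
    have hns : ∀ j : Fin n, volume (P none ∩ P (some j)) = 0 := by
      intro j
      refine measure_mono_null (t := {x : Fin n → ℝ | (LinearMap.proj j :
        (Fin n → ℝ) →ₗ[ℝ] ℝ) x = 0}) ?_ ?_
      · rintro x ⟨hx1, hx2⟩
        have h1 := hPnone x hx1 j
        have h2 := (hPsome j x hx2 j).2
        simp only [Set.mem_setOf_eq, LinearMap.proj_apply]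
        linarith
      · apply hyperplane_null _ (Pi.single j 1)
        simp
    have hss : ∀ j k : Fin n, j ≠ k → volume (P (some j) ∩ P (some k)) = 0 := by
      intro j k hjk
      refine measure_mono_null (t := {x : Fin n → ℝ |
        ((d j : ℝ) • (LinearMap.proj k) - (d k : ℝ) • (LinearMap.proj j) :
          (Fin n → ℝ) →ₗ[ℝ] ℝ) x = 0}) ?_ ?_
      · rintro x ⟨hx1, hx2⟩
        have h1 := (hPsome j x hx1 k).1
        have h2 := (hPsome k x hx2 j).1
        simp only [Set.mem_setOf_eq, LinearMap.sub_apply, LinearMap.smul_apply,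
          LinearMap.proj_apply, smul_eq_mul]
        nlinarith [h1, h2]
      · apply hyperplane_null _ (Pi.single k 1)
        simp only [LinearMap.sub_apply, LinearMap.smul_apply, LinearMap.proj_apply, smul_eq_mul,
          Pi.single_eq_same, mul_one, Pi.single_eq_of_ne hjk, mul_zero, sub_zero]
        exact (hdR j).ne'
    intro o o' hoo'
    rcases o with _ | j <;> rcases o' with _ | k
    · exact absurd rfl hoo'
    · exact hns k
    · exact MeasureTheory.AEDisjoint.symm (hns j)
    · exact hss j k (fun h => hoo' (by rw [h]))
  rw [hΔ, measure_iUnion₀ hae hPm, tsum_fintype, Fintype.sum_option]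
  -- volumes of the pieces
  have hvol_none : volume (P none) = ENNReal.ofReal ((∏ i, (a i : ℝ)) / n.factorial) := by
    rw [hPdef]
    simp only [Option.elim_none]
    rw [volume_hull]
    congr 2
    have hM : (Matrix.of fun i k => v0 k i) = Matrix.diagonal (fun i => (a i : ℝ)) := by
      ext i k
      rw [Matrix.of_apply, hv0, Matrix.diagonal_apply]
      by_cases h : i = k
      · subst h; simp
      · simp [h]
    rw [hM, Matrix.det_diagonal, abs_of_pos (Finset.prod_pos fun i _ => haR i)]
  have hvol_some : ∀ j, volume (P (some j)) =
      ENNReal.ofReal ((d j : ℝ) * (∏ i ∈ Finset.univ.erase j, (a i : ℝ)) / n.factorial) := by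
    intro j
    rw [hPdef]
    simp only [Option.elim_some]
    rw [volume_hull]
    congr 2
    have hM : (Matrix.of fun i k => w j k i) = (Matrix.of fun i k =>
        if k = j then -(d i : ℝ) else (if i = k then (a k : ℝ) else 0)) := by
      ext i k
      rw [Matrix.of_apply, Matrix.of_apply]
      simp only [hw]
      by_cases h : k = j
      · rw [if_pos h, if_pos h]
      · rw [if_neg h, if_neg h]
    rw [hM, det_col n _ _ (fun i => (haR i).ne') j, neg_mul, abs_neg,
      abs_of_pos (mul_pos (hdR j) (Finset.prod_pos fun i _ => haR i))]
  rw [hvol_none]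
  simp only [hvol_some]
  have hnn : ∀ j : Fin n, 0 ≤ (d j : ℝ) * (∏ i ∈ Finset.univ.erase j, (a i : ℝ)) / n.factorial :=
    fun j => div_nonneg (mul_nonneg (hdR j).le (Finset.prod_nonneg fun i _ => (haR i).le))
      (Nat.cast_nonneg _)
  rw [← ENNReal.ofReal_sum_of_nonneg (fun j _ => hnn j),
    ← ENNReal.ofReal_add (div_nonneg (Finset.prod_nonneg fun i _ => (haR i).le)
      (Nat.cast_nonneg _)) (Finset.sum_nonneg fun j _ => hnn j)]
  congr 1
  rw [add_div, Finset.sum_div]
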